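/- Let X ∈ ℝ^{n×N}, let e ∈ ℝ^N be the all-ones vector, and let μ = (1/N) X e ∈ ℝ^n be the row-mean vector of X. Let A = [eᵀ; X] ∈ ℝ^{(n+1)×N} be the matrix obtained by stacking eᵀ on top of X, and let à = [eᵀ; X − μ eᵀ] be the matrix obtained by stacking eᵀ on top of the centered data matrix. Assume both A and à have full row rank. Then κ(Ã) ≤ κ(A), where for a full-row-rank matrix B, κ(B) denotes the ratio of its largest singular value to its smallest nonzero singular value. -/

import Mathlib

open scoped Matrix

/-- The condition number of a full-row-rank matrix `B ∈ ℝ^{d×N}`: the ratio of its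
largest singular value to its smallest nonzero singular value, obtained as the
supremum and infimum of `‖Bᵀ u‖` over unit vectors `u ∈ ℝ^d`. -/
noncomputable def rowCondNum {d N : ℕ} (B : Matrix (Fin d) (Fin N) ℝ) : ℝ :=
  (⨆ u : Metric.sphere (0 : EuclideanSpace ℝ (Fin d)) 1, ‖Matrix.toEuclideanLin Bᵀ u‖) /
  (⨅ u : Metric.sphere (0 : EuclideanSpace ℝ (Fin d)) 1, ‖Matrix.toEuclideanLin Bᵀ u‖)


private lemma norm_le_of_sq_le {x y : ℝ} (hy : 0 ≤ y) (h : x ^ 2 ≤ y ^ 2) :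
    x ≤ y := by nlinarith

private lemma norm_toEuc_sq {d N : ℕ} (B : Matrix (Fin d) (Fin N) ℝ)
    (u : EuclideanSpace ℝ (Fin d)) :
    ‖Matrix.toEuclideanLin Bᵀ u‖ ^ 2 = ∑ j, (∑ i, B i j * u i) ^ 2 := by
  rw [EuclideanSpace.norm_eq, Real.sq_sqrt (by positivity)]
  refine Finset.sum_congr rfl fun j _ => ?_
  have : (Matrix.toEuclideanLin Bᵀ u) j = ∑ i, B i j * u i := by
    simp [Matrix.toEuclideanLin_apply, Matrix.mulVec, dotProduct]
  rw [this, Real.norm_eq_abs, sq_abs]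

private lemma norm_eucl_sq {d : ℕ} (u : EuclideanSpace ℝ (Fin d)) :
    ‖u‖ ^ 2 = ∑ i, (u i) ^ 2 := by
  rw [EuclideanSpace.norm_eq, Real.sq_sqrt (by positivity)]
  exact Finset.sum_congr rfl fun i _ => by rw [Real.norm_eq_abs, sq_abs]


private lemma sum_c_add_sq {N : ℕ} (c : ℝ) (d : Fin N → ℝ) (hd : ∑ j, d j = 0) :
    ∑ j, (c + d j) ^ 2 = N * c ^ 2 + ∑ j, (d j) ^ 2 := by
  have h : ∀ j : Fin N, (c + d j) ^ 2 = c ^ 2 + ((2 * c) * d j + d j ^ 2) := fun j => by ring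
  simp_rw [h]
  rw [Finset.sum_add_distrib, Finset.sum_add_distrib, ← Finset.mul_sum, hd]
  simp [mul_comm]

section main
variable {n N : ℕ} (X : Matrix (Fin n) (Fin N) ℝ) (μ : Fin n → ℝ)
  (A : Matrix (Fin (n + 1)) (Fin N) ℝ)

private lemma normA_sq'
    (hsum : ∀ i, ∑ j, X i j = N * μ i)
    (hA : ∀ i j, A i j = Fin.cons (α := fun _ => ℝ) 1 (fun i' => X i' j) i)
    (u : EuclideanSpace ℝ (Fin (n + 1))) :
    ‖Matrix.toEuclideanLin Aᵀ u‖ ^ 2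
      = N * (u 0 + ∑ i', μ i' * u i'.succ) ^ 2
        + ∑ j, (∑ i', (X i' j - μ i') * u i'.succ) ^ 2 := by
  rw [norm_toEuc_sq]
  have h1 : ∀ j : Fin N, ∑ i, A i j * u i
      = (u 0 + ∑ i', μ i' * u i'.succ) + ∑ i', (X i' j - μ i') * u i'.succ := by
    intro j
    rw [Fin.sum_univ_succ]
    simp only [hA, Fin.cons_zero, Fin.cons_succ, one_mul]
    rw [add_assoc, ← Finset.sum_add_distrib]
    congr 1
    refine Finset.sum_congr rfl fun i' _ => by ring
  simp_rw [h1]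
  refine sum_c_add_sq _ _ ?_
  rw [Finset.sum_comm]
  refine Finset.sum_eq_zero fun i' _ => ?_
  rw [← Finset.sum_mul, Finset.sum_sub_distrib, hsum, Finset.sum_const]
  simp

/-- sup-side: for any unit `u`, there is a unit `w` with `‖Ãᵀu‖ ≤ ‖Aᵀw‖`. -/
private lemma exists_ge (Atil : Matrix (Fin (n + 1)) (Fin N) ℝ)
    (hsum : ∀ i, ∑ j, X i j = N * μ i)
    (hA : ∀ i j, A i j = Fin.cons (α := fun _ => ℝ) 1 (fun i' => X i' j) i)
    (hAtil : ∀ i j, Atil i j = Fin.cons (α := fun _ => ℝ) 1 (fun i' => X i' j - μ i') i)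
    (u : EuclideanSpace ℝ (Fin (n + 1))) (hu : ‖u‖ = 1) :
    ∃ w : EuclideanSpace ℝ (Fin (n + 1)), ‖w‖ = 1 ∧
      ‖Matrix.toEuclideanLin Atilᵀ u‖ ≤ ‖Matrix.toEuclideanLin Aᵀ w‖ := by
  set m : ℝ := ∑ i', μ i' * u i'.succ with hm
  set b : ℝ := if 0 ≤ u 0 * m then u 0 else -(u 0) with hb
  set w : EuclideanSpace ℝ (Fin (n + 1)) := WithLp.toLp 2 (Function.update u 0 b) with hw
  have hw0 : w 0 = b := Function.update_self (0 : Fin (n + 1)) b u.ofLp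
  have hws : ∀ i' : Fin n, w i'.succ = u i'.succ := fun i' =>
    Function.update_of_ne (Fin.succ_ne_zero i') b u.ofLp
  have hbsq : b ^ 2 = (u 0) ^ 2 := by
    rw [hb]; split <;> ring
  have hbm : 0 ≤ b * m := by
    rw [hb]; split
    · assumption
    · push_neg at * ; nlinarith
  have hwnorm : ‖w‖ = 1 := by
    have h1 : ‖w‖ ^ 2 = ‖u‖ ^ 2 := by
      have h2 : ∑ i' : Fin n, (w i'.succ) ^ 2 = ∑ i' : Fin n, (u i'.succ) ^ 2 :=
        Finset.sum_congr rfl fun i' _ => by rw [hws]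
      rw [norm_eucl_sq, norm_eucl_sq, Fin.sum_univ_succ, Fin.sum_univ_succ, hw0, hbsq, h2]
    have := norm_le_of_sq_le (norm_nonneg u) h1.le
    have := norm_le_of_sq_le (norm_nonneg w) h1.ge
    linarith [hu]
  refine ⟨w, hwnorm, ?_⟩
  have hsumT : ∀ i, ∑ j, (X i j - μ i) = (N : ℝ) * (0 : Fin n → ℝ) i := by
    intro i
    rw [Finset.sum_sub_distrib, hsum, Finset.sum_const]
    simp
  have hT := normA_sq' (fun i j => X i j - μ i) 0 Atil hsumT hAtil u
  have hA2 := normA_sq' X μ A hsum hA w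
  refine norm_le_of_sq_le (norm_nonneg _) ?_
  rw [hT, hA2]
  have hQ : ∑ j, (∑ i', (X i' j - μ i' - (0:Fin n → ℝ) i') * u i'.succ) ^ 2
      = ∑ j, (∑ i', (X i' j - μ i') * w i'.succ) ^ 2 := by
    refine Finset.sum_congr rfl fun j _ => ?_
    congr 1
    exact Finset.sum_congr rfl fun i' _ => by rw [hws]; simp
  have hm2 : ∑ i', μ i' * w i'.succ = m := by
    rw [hm]; exact Finset.sum_congr rfl fun i' _ => by rw [hws]
  rw [hQ, hm2, hw0]
  have : (u 0 + ∑ i', (0:Fin n → ℝ) i' * u i'.succ) ^ 2 = (u 0) ^ 2 := by simp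
  rw [this]
  have : (u 0) ^ 2 ≤ (b + m) ^ 2 := by nlinarith [hbsq, hbm]
  nlinarith [this, Nat.cast_nonneg (α := ℝ) N]

end main

section main2
variable {n N : ℕ} (X : Matrix (Fin n) (Fin N) ℝ) (μ : Fin n → ℝ)
  (A : Matrix (Fin (n + 1)) (Fin N) ℝ)

/-- inf-side: for any unit `u`, there is a unit `w` with `‖Aᵀw‖ ≤ ‖Ãᵀu‖`. -/
private lemma exists_le (Atil : Matrix (Fin (n + 1)) (Fin N) ℝ)
    (hsum : ∀ i, ∑ j, X i j = N * μ i)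
    (hA : ∀ i j, A i j = Fin.cons (α := fun _ => ℝ) 1 (fun i' => X i' j) i)
    (hAtil : ∀ i j, Atil i j = Fin.cons (α := fun _ => ℝ) 1 (fun i' => X i' j - μ i') i)
    (u : EuclideanSpace ℝ (Fin (n + 1))) (hu : ‖u‖ = 1) :
    ∃ w : EuclideanSpace ℝ (Fin (n + 1)), ‖w‖ = 1 ∧
      ‖Matrix.toEuclideanLin Aᵀ w‖ ≤ ‖Matrix.toEuclideanLin Atilᵀ u‖ := by
  set m : ℝ := ∑ i', μ i' * u i'.succ with hm
  set c : ℝ := if 0 ≤ u 0 * m then -(u 0) else u 0 with hc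
  set w₀ : EuclideanSpace ℝ (Fin (n + 1)) := WithLp.toLp 2 (Function.update u 0 (c - m)) with hw
  have hw0 : w₀ 0 = c - m := Function.update_self (0 : Fin (n + 1)) (c - m) u.ofLp
  have hws : ∀ i' : Fin n, w₀ i'.succ = u i'.succ := fun i' =>
    Function.update_of_ne (Fin.succ_ne_zero i') (c - m) u.ofLp
  have hcsq : c ^ 2 = (u 0) ^ 2 := by rw [hc]; split <;> ring
  have hcm : c * m ≤ 0 := by
    rw [hc]; split
    · nlinarith
    · push_neg at *; nlinarith
  -- the two squared norms
  have hsumT : ∀ i, ∑ j, (X i j - μ i) = (N : ℝ) * (0 : Fin n → ℝ) i := by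
    intro i
    rw [Finset.sum_sub_distrib, hsum, Finset.sum_const]
    simp
  have hT := normA_sq' (fun i j => X i j - μ i) 0 Atil hsumT hAtil u
  have hA2 := normA_sq' X μ A hsum hA w₀
  have hm2 : ∑ i', μ i' * w₀ i'.succ = m := by
    rw [hm]; exact Finset.sum_congr rfl fun i' _ => by rw [hws]
  have hQ : ∑ j, (∑ i', (X i' j - μ i' - (0:Fin n → ℝ) i') * u i'.succ) ^ 2
      = ∑ j, (∑ i', (X i' j - μ i') * w₀ i'.succ) ^ 2 := by
    refine Finset.sum_congr rfl fun j _ => ?_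
    congr 1
    exact Finset.sum_congr rfl fun i' _ => by rw [hws]; simp
  have hTu : ‖Matrix.toEuclideanLin Atilᵀ u‖ ^ 2
      = N * (u 0) ^ 2 + ∑ j, (∑ i', (X i' j - μ i') * w₀ i'.succ) ^ 2 := by
    rw [hT, ← hQ]; simp
  have hAw : ‖Matrix.toEuclideanLin Aᵀ w₀‖ ^ 2
      = N * (u 0) ^ 2 + ∑ j, (∑ i', (X i' j - μ i') * w₀ i'.succ) ^ 2 := by
    rw [hA2, hm2, hw0]
    congr 2
    rw [← hcsq]; ring
  have heq : ‖Matrix.toEuclideanLin Aᵀ w₀‖ = ‖Matrix.toEuclideanLin Atilᵀ u‖ := by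
    have h := hAw.trans hTu.symm
    have h1 := norm_le_of_sq_le (norm_nonneg _) h.le
    have h2 := norm_le_of_sq_le (norm_nonneg _) h.ge
    linarith
  have hw₀norm : 1 ≤ ‖w₀‖ := by
    have h2 : ∑ i' : Fin n, (w₀ i'.succ) ^ 2 = ∑ i' : Fin n, (u i'.succ) ^ 2 :=
      Finset.sum_congr rfl fun i' _ => by rw [hws]
    have hsq : ‖u‖ ^ 2 ≤ ‖w₀‖ ^ 2 := by
      rw [norm_eucl_sq, norm_eucl_sq, Fin.sum_univ_succ, Fin.sum_univ_succ, hw0, h2]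
      have : (u 0) ^ 2 ≤ (c - m) ^ 2 := by nlinarith
      linarith
    rw [hu] at hsq
    exact norm_le_of_sq_le (norm_nonneg _) (by simpa using hsq)
  have hw₀pos : (0:ℝ) < ‖w₀‖ := lt_of_lt_of_le one_pos hw₀norm
  refine ⟨‖w₀‖⁻¹ • w₀, ?_, ?_⟩
  · rw [norm_smul, norm_inv, norm_norm, inv_mul_cancel₀ hw₀pos.ne']
  · rw [map_smul, norm_smul, norm_inv, norm_norm, heq]
    exact mul_le_of_le_one_left (norm_nonneg _) (inv_le_one_of_one_le₀ hw₀norm)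

end main2


private lemma toEuc_inj {n N : ℕ} (A : Matrix (Fin (n + 1)) (Fin N) ℝ)
    (h : A.rank = n + 1) : Function.Injective (Matrix.toEuclideanLin Aᵀ) := by
  have hker : LinearMap.ker (Aᵀ.mulVecLin) = ⊥ := by
    have h1 := LinearMap.finrank_range_add_finrank_ker (Aᵀ.mulVecLin)
    have h2 : Module.finrank ℝ (LinearMap.range Aᵀ.mulVecLin) = Aᵀ.rank := rfl
    rw [h2, Matrix.rank_transpose, h, Module.finrank_pi, Fintype.card_fin] at h1
    have h3 : Module.finrank ℝ (LinearMap.ker Aᵀ.mulVecLin) = 0 := by omega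
    exact Submodule.finrank_eq_zero.mp h3
  have hmv : Function.Injective (Aᵀ.mulVecLin) := LinearMap.ker_eq_bot.mp hker
  intro x y hxy
  rw [Matrix.toEuclideanLin_apply, Matrix.toEuclideanLin_apply] at hxy
  have := (WithLp.equiv 2 (Fin N → ℝ)).symm.injective hxy
  exact (WithLp.equiv 2 (Fin (n + 1) → ℝ)).injective (hmv this)


/-- **Centering does not worsen the conditioning of the extended data matrix**
(Theorem 4 of the paper / Theorem 4 of Lange-Zheng-Ye). For `μ = (1/N) X e` the
row-mean vector, `A = [eᵀ; X]` and `Ã = [eᵀ; X - μ eᵀ]` both of full row rank,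
we have `κ(Ã) ≤ κ(A)`. -/
theorem stmt_14 (n N : ℕ) (X : Matrix (Fin n) (Fin N) ℝ)
    (μ : Fin n → ℝ) (hμ : ∀ i, μ i = (1 / (N : ℝ)) * ∑ j, X i j)
    (A Atil : Matrix (Fin (n + 1)) (Fin N) ℝ)
    (hA : ∀ i j, A i j = Fin.cons (α := fun _ => ℝ) 1 (fun i' => X i' j) i)
    (hAtil : ∀ i j, Atil i j = Fin.cons (α := fun _ => ℝ) 1 (fun i' => X i' j - μ i') i)
    (hArank : A.rank = n + 1) (hAtilrank : Atil.rank = n + 1) :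
    rowCondNum Atil ≤ rowCondNum A := by
  have hNle : n + 1 ≤ N := hArank ▸ A.rank_le_width
  have hN0 : (N : ℝ) ≠ 0 := Nat.cast_ne_zero.mpr (by omega)
  have hsum : ∀ i, ∑ j, X i j = N * μ i := fun i => by rw [hμ i]; field_simp
  set S := Metric.sphere (0 : EuclideanSpace ℝ (Fin (n + 1))) 1 with hS
  have hu₀mem : EuclideanSpace.single (0 : Fin (n + 1)) (1 : ℝ) ∈ S := by
    rw [hS, mem_sphere_zero_iff_norm, EuclideanSpace.norm_single, norm_one]
  haveI : Nonempty S := ⟨⟨_, hu₀mem⟩⟩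
  have hcontA : Continuous fun u : EuclideanSpace ℝ (Fin (n + 1)) =>
      ‖Matrix.toEuclideanLin Aᵀ u‖ :=
    (LinearMap.continuous_of_finiteDimensional _).norm
  have hbddA : BddAbove (Set.range fun u : S => ‖Matrix.toEuclideanLin Aᵀ u‖) := by
    have hsub : (Set.range fun u : S => ‖Matrix.toEuclideanLin Aᵀ u‖)
        ⊆ (fun u : EuclideanSpace ℝ (Fin (n + 1)) => ‖Matrix.toEuclideanLin Aᵀ u‖) '' S := by
      rintro x ⟨u, rfl⟩; exact ⟨u, u.2, rfl⟩
    exact BddAbove.mono hsub ((isCompact_sphere _ _).bddAbove_image hcontA.continuousOn)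
  have hbddB : BddBelow (Set.range fun u : S => ‖Matrix.toEuclideanLin Aᵀ u‖) := by
    refine ⟨0, fun x hx => ?_⟩
    obtain ⟨u, rfl⟩ := hx
    exact norm_nonneg _
  have hsup : (⨆ u : S, ‖Matrix.toEuclideanLin Atilᵀ u‖)
      ≤ ⨆ u : S, ‖Matrix.toEuclideanLin Aᵀ u‖ := by
    refine ciSup_le fun u => ?_
    obtain ⟨w, hw1, hw2⟩ := exists_ge X μ A Atil hsum hA hAtil u
      (mem_sphere_zero_iff_norm.mp u.2)
    exact hw2.trans (le_ciSup hbddA (⟨w, mem_sphere_zero_iff_norm.mpr hw1⟩ : S))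
  have hinf : (⨅ u : S, ‖Matrix.toEuclideanLin Aᵀ u‖)
      ≤ ⨅ u : S, ‖Matrix.toEuclideanLin Atilᵀ u‖ := by
    refine le_ciInf fun u => ?_
    obtain ⟨w, hw1, hw2⟩ := exists_le X μ A Atil hsum hA hAtil u
      (mem_sphere_zero_iff_norm.mp u.2)
    exact (ciInf_le hbddB (⟨w, mem_sphere_zero_iff_norm.mpr hw1⟩ : S)).trans hw2
  have hinfpos : 0 < ⨅ u : S, ‖Matrix.toEuclideanLin Aᵀ u‖ := by
    obtain ⟨u₀, hu₀S, hmin⟩ := (isCompact_sphere (0 : EuclideanSpace ℝ (Fin (n + 1))) 1)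
      |>.exists_isMinOn ⟨_, hu₀mem⟩ hcontA.continuousOn
    have hpos : 0 < ‖Matrix.toEuclideanLin Aᵀ u₀‖ := by
      rw [norm_pos_iff]
      intro hzero
      have h0 : Matrix.toEuclideanLin Aᵀ u₀ = Matrix.toEuclideanLin Aᵀ 0 := by
        rw [hzero, map_zero]
      have := toEuc_inj A hArank h0
      rw [this] at hu₀S
      have : ‖(0 : EuclideanSpace ℝ (Fin (n + 1)))‖ = 1 := mem_sphere_zero_iff_norm.mp hu₀S
      simp at this
    exact lt_of_lt_of_le hpos (le_ciInf fun u => hmin u.2)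
  have hsupnn : 0 ≤ ⨆ u : S, ‖Matrix.toEuclideanLin Aᵀ u‖ :=
    le_trans (norm_nonneg _) (le_ciSup hbddA (Classical.arbitrary S))
  unfold rowCondNum
  exact div_le_div₀ hsupnn hsup hinfpos hinf
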